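/- Heine's formula for the partition function: let w : ℝ → [0, ∞) be a measurable weight with all moments finite, and suppose (P_m)_{m ≥ 0} is a sequence of monic real polynomials with deg P_m = m satisfying the orthogonality relations ∫_ℝ P_m(x) P_k(x) w(x) dx = δ_{mk} h_m with h_m > 0 for all m, k ≥ 0. Then for every n ≥ 1, Z_n := ∫_{ℝ^n} ∏_{1 ≤ i < j ≤ n} (λ_j − λ_i)² ∏_{i=1}^n w(λ_i) dλ_i = n! ∏_{m=0}^{n−1} h_m. -/

import Mathlib

open MeasureTheory

lemma poly_mul_w_integrable (w : ℝ → ℝ) (hw_meas : Measurable w)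
    (hw_nonneg : ∀ x, 0 ≤ w x) (hw_mom : ∀ k : ℕ, Integrable (fun x => |x| ^ k * w x))
    (Q : Polynomial ℝ) : Integrable (fun x => Q.eval x * w x) := by
  have heq : (fun x => Q.eval x * w x) =
      fun x => ∑ j ∈ Finset.range (Q.natDegree + 1), Q.coeff j * (x ^ j * w x) := by
    funext x
    rw [Polynomial.eval_eq_sum_range, Finset.sum_mul]
    simp [mul_assoc]
  rw [heq]
  apply integrable_finset_sum
  intro j _
  have hint : Integrable (fun x : ℝ => x ^ j * w x) := by
    refine (hw_mom j).mono' ?_ ?_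
    · exact ((measurable_id.pow_const j).mul hw_meas).aestronglyMeasurable
    · filter_upwards with x
      rw [Real.norm_eq_abs, abs_mul, abs_pow, abs_of_nonneg (hw_nonneg x)]
  exact hint.const_mul (Q.coeff j)

/-- **Heine's formula for the partition function.**  Let `w : ℝ → [0,∞)` be a
measurable weight with all moments finite, and `(P m)` the monic orthogonal polynomials
for `w`: `deg P_m = m`, `∫ P_m P_k w = δ_{mk} h_m` with `h_m > 0`.  Then
`Z_n = ∫_{ℝⁿ} ∏_{i<j} (λ_j - λ_i)² ∏ᵢ w(λᵢ) dλ = n! ∏_{m=0}^{n-1} h_m`. -/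
theorem heine_partition_function (w : ℝ → ℝ)
    (hw_meas : Measurable w) (hw_nonneg : ∀ x, 0 ≤ w x)
    (hw_mom : ∀ k : ℕ, Integrable (fun x => |x| ^ k * w x))
    (P : ℕ → Polynomial ℝ) (hP : ∀ m, (P m).Monic) (hPdeg : ∀ m, (P m).natDegree = m)
    (h : ℕ → ℝ) (hpos : ∀ m, 0 < h m)
    (horth : ∀ m k : ℕ,
      (∫ x : ℝ, (P m).eval x * (P k).eval x * w x) = if m = k then h m else 0)
    (n : ℕ) (hn : 1 ≤ n) :
    (∫ lam : Fin n → ℝ,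
        (∏ i : Fin n, ∏ j ∈ Finset.Ioi i, (lam j - lam i) ^ 2) * ∏ i, w (lam i))
      = (n.factorial : ℝ) * ∏ m ∈ Finset.range n, h m := by
  classical
  -- the basic one-variable integrals
  have horth' : ∀ a b : ℕ, (∫ x : ℝ, (P a).eval x * (P b).eval x * w x)
      = if a = b then h a else 0 := horth
  -- integrability of each product term
  have hint1 : ∀ a b : ℕ, Integrable (fun x : ℝ => (P a).eval x * (P b).eval x * w x) := by
    intro a b
    have := poly_mul_w_integrable w hw_meas hw_nonneg hw_mom (P a * P b)
    simpa [Polynomial.eval_mul] using this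
  -- sign function as a real number
  set ε : Equiv.Perm (Fin n) → ℝ := fun σ => ((Equiv.Perm.sign σ : ℤ) : ℝ) with hε
  -- rewrite the integrand as a double sum over permutations
  have hintegrand : ∀ lam : Fin n → ℝ,
      (∏ i : Fin n, ∏ j ∈ Finset.Ioi i, (lam j - lam i) ^ 2) * ∏ i, w (lam i)
        = ∑ σ : Equiv.Perm (Fin n), ∑ τ : Equiv.Perm (Fin n), (ε σ * ε τ) *
            ∏ i : Fin n, ((P (σ i)).eval (lam i) * (P (τ i)).eval (lam i) * w (lam i)) := by
    intro lam
    have hvdm : (∏ i : Fin n, ∏ j ∈ Finset.Ioi i, (lam j - lam i) ^ 2)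
        = ((Matrix.vandermonde lam).det) ^ 2 := by
      rw [Matrix.det_vandermonde]
      rw [← Finset.prod_pow]
      exact Finset.prod_congr rfl fun i _ => (Finset.prod_pow _ _ _)
    have hdet : (Matrix.vandermonde lam).det
        = ∑ σ : Equiv.Perm (Fin n), ε σ * ∏ i : Fin n, (P (σ i)).eval (lam i) := by
      rw [Matrix.det_eval_matrixOfPolynomials_eq_det_vandermonde lam (fun i : Fin n => P i)
        (fun i => hPdeg i) (fun i => hP i)]
      rw [← Matrix.det_transpose, Matrix.det_apply']
      refine Finset.sum_congr rfl fun σ _ => ?_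
      simp [Matrix.transpose_apply, ε]
    rw [hvdm, hdet, sq, Finset.sum_mul_sum, Finset.sum_mul]
    refine Finset.sum_congr rfl fun σ _ => ?_
    rw [Finset.sum_mul]
    refine Finset.sum_congr rfl fun τ _ => ?_
    simp only [Finset.prod_mul_distrib]
    ring
  simp_rw [hintegrand]
  -- integrability of each term
  have hterm_int : ∀ σ τ : Equiv.Perm (Fin n), Integrable
      (fun lam : Fin n → ℝ =>
        ∏ i : Fin n, ((P (σ i)).eval (lam i) * (P (τ i)).eval (lam i) * w (lam i))) := by
    intro σ τ
    exact Integrable.fintype_prod (fun i => hint1 (σ i) (τ i))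
  rw [integral_finset_sum]
  swap
  · intro σ _
    apply integrable_finset_sum
    intro τ _
    exact ((hterm_int σ τ).const_mul _)
  have hτsum : ∀ σ : Equiv.Perm (Fin n),
      (∫ lam : Fin n → ℝ, ∑ τ : Equiv.Perm (Fin n), (ε σ * ε τ) *
          ∏ i : Fin n, ((P (σ i)).eval (lam i) * (P (τ i)).eval (lam i) * w (lam i)))
        = ∏ m ∈ Finset.range n, h m := by
    intro σ
    rw [integral_finset_sum _ (fun τ _ => (hterm_int σ τ).const_mul _)]
    have hterm : ∀ τ : Equiv.Perm (Fin n),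
        (∫ lam : Fin n → ℝ,
            ∏ i : Fin n, ((P (σ i)).eval (lam i) * (P (τ i)).eval (lam i) * w (lam i)))
          = ∏ i : Fin n, (if (σ i : ℕ) = τ i then h (σ i) else 0) := by
      intro τ
      rw [integral_fintype_prod_volume_eq_prod (f := fun (i : Fin n) (x : ℝ) =>
        (P (σ i)).eval x * (P (τ i)).eval x * w x)]
      exact Finset.prod_congr rfl fun i _ => horth' (σ i) (τ i)
    calc (∑ τ : Equiv.Perm (Fin n), ∫ lam : Fin n → ℝ, (ε σ * ε τ) *
            ∏ i : Fin n, ((P (σ i)).eval (lam i) * (P (τ i)).eval (lam i) * w (lam i)))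
        = ∑ τ : Equiv.Perm (Fin n), (ε σ * ε τ) *
            ∏ i : Fin n, (if (σ i : ℕ) = τ i then h (σ i) else 0) := by
          refine Finset.sum_congr rfl fun τ _ => ?_
          rw [integral_const_mul, hterm τ]
      _ = ∏ m ∈ Finset.range n, h m := by
          rw [Finset.sum_eq_single σ]
          · have hsq : ε σ * ε σ = 1 := by
              simp only [ε, ← Int.cast_mul, ← Units.val_mul]
              norm_cast
              simp
            rw [hsq, one_mul]
            have h1 : (∏ i : Fin n, (if (σ i : ℕ) = σ i then h (σ i) else 0))
                = ∏ i : Fin n, h ((σ i : Fin n) : ℕ) :=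
              Finset.prod_congr rfl fun i _ => if_pos rfl
            rw [h1, Equiv.prod_comp σ (fun i : Fin n => h (i : ℕ))]
            exact Fin.prod_univ_eq_prod_range (fun m => h m) n
          · intro τ _ hτ
            have : ∃ i : Fin n, σ i ≠ τ i := by
              by_contra hc
              push_neg at hc
              exact hτ (Equiv.ext fun i => (hc i)).symm
            obtain ⟨i, hi⟩ := this
            have hi' : (σ i : ℕ) ≠ (τ i : ℕ) := fun hcast => hi (Fin.val_injective hcast)
            have h0 : (∏ i : Fin n, (if (σ i : ℕ) = τ i then h (σ i) else 0)) = 0 :=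
              Finset.prod_eq_zero (Finset.mem_univ i) (if_neg hi')
            rw [h0, mul_zero]
          · intro habs
            exact absurd (Finset.mem_univ σ) habs
  calc (∑ σ : Equiv.Perm (Fin n), ∫ lam : Fin n → ℝ, ∑ τ : Equiv.Perm (Fin n), (ε σ * ε τ) *
          ∏ i : Fin n, ((P (σ i)).eval (lam i) * (P (τ i)).eval (lam i) * w (lam i)))
      = ∑ σ : Equiv.Perm (Fin n), ∏ m ∈ Finset.range n, h m :=
        Finset.sum_congr rfl fun σ _ => hτsum σ
    _ = (n.factorial : ℝ) * ∏ m ∈ Finset.range n, h m := by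
        rw [Finset.sum_const, Finset.card_univ, Fintype.card_perm, Fintype.card_fin,
          nsmul_eq_mul]
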